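/- For any real I₁ × I₂ matrix B of rank at most r, one has ‖B‖_* = min { (1/2)(‖A₁‖_F² + ‖A₂‖_F²) : A₁ ∈ ℝ^{I₁×r}, A₂ ∈ ℝ^{I₂×r}, B = A₁A₂ᵀ }, where ‖B‖_* is the nuclear norm of B. -/

import Mathlib

open Matrix

/-- The nuclear norm of a real matrix: sum of its singular values,
i.e. the square roots of the eigenvalues of `Xᴴ * X`. -/
noncomputable def nuclearNorm {m n : ℕ} (X : Matrix (Fin m) (Fin n) ℝ) : ℝ :=
  ∑ i, Real.sqrt ((Matrix.isHermitian_conjTranspose_mul_self X).eigenvalues i)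

/-- Squared Frobenius norm. -/
def frobSq {m n : ℕ} (X : Matrix (Fin m) (Fin n) ℝ) : ℝ :=
  ∑ i, ∑ j, (X i j) ^ 2

lemma frobSq_eq_trace {m n : ℕ} (X : Matrix (Fin m) (Fin n) ℝ) :
    frobSq X = Matrix.trace (Xᵀ * X) := by
  simp only [frobSq, Matrix.trace, Matrix.diag, Matrix.mul_apply, Matrix.transpose_apply, pow_two]
  exact Finset.sum_comm

lemma frobSq_eq_trace' {m n : ℕ} (X : Matrix (Fin m) (Fin n) ℝ) :
    frobSq X = Matrix.trace (X * Xᵀ) := by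
  rw [frobSq_eq_trace, Matrix.trace_mul_comm]

lemma frobSq_nonneg {m n : ℕ} (X : Matrix (Fin m) (Fin n) ℝ) : 0 ≤ frobSq X := by
  apply Finset.sum_nonneg; intro i _; apply Finset.sum_nonneg; intro j _; positivity

lemma trace_transpose_mul_le {m n : ℕ} (X Y : Matrix (Fin m) (Fin n) ℝ) :
    Matrix.trace (Xᵀ * Y) ≤ (1/2) * (frobSq X + frobSq Y) := by
  have h : Matrix.trace (Xᵀ * Y) = ∑ i, ∑ j, X i j * Y i j := by
    simp only [Matrix.trace, Matrix.diag, Matrix.mul_apply, Matrix.transpose_apply]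
    exact Finset.sum_comm
  rw [h, frobSq, frobSq, ← Finset.sum_add_distrib, Finset.mul_sum]
  apply Finset.sum_le_sum; intro i _
  rw [← Finset.sum_add_distrib, Finset.mul_sum]
  apply Finset.sum_le_sum; intro j _
  nlinarith [sq_nonneg (X i j - Y i j)]


lemma diag_mul_diag_mul {n m : ℕ} (f g : Fin n → ℝ) (C : Matrix (Fin n) (Fin m) ℝ) :
    diagonal f * (diagonal g * C) = diagonal (fun i => f i * g i) * C := by
  rw [← Matrix.mul_assoc, diagonal_mul_diagonal]

lemma diag3_mul {n m : ℕ} (f g h : Fin n → ℝ) (C : Matrix (Fin n) (Fin m) ℝ) :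
    diagonal f * (diagonal g * (diagonal h * C)) = diagonal (fun i => f i * g i * h i) * C := by
  rw [diag_mul_diag_mul, diag_mul_diag_mul]

set_option maxHeartbeats 1000000 in
theorem stmt4 {I₁ I₂ r : ℕ} (B : Matrix (Fin I₁) (Fin I₂) ℝ) (hrank : B.rank ≤ r) :
    IsLeast {v : ℝ | ∃ (A₁ : Matrix (Fin I₁) (Fin r) ℝ) (A₂ : Matrix (Fin I₂) (Fin r) ℝ),
        B = A₁ * A₂ᵀ ∧ v = (1 / 2) * (frobSq A₁ + frobSq A₂)}
      (nuclearNorm B) := by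
  classical
  have hM := Matrix.isHermitian_conjTranspose_mul_self B
  have hnn : nuclearNorm B = ∑ i, Real.sqrt (hM.eigenvalues i) := rfl
  obtain ⟨μ, hμdef⟩ : ∃ μ, μ = hM.eigenvalues := ⟨_, rfl⟩
  rw [← hμdef] at hnn
  obtain ⟨V, hVdef⟩ : ∃ V', V' = (hM.eigenvectorUnitary : Matrix (Fin I₂) (Fin I₂) ℝ) :=
    ⟨_, rfl⟩
  have hBH : Bᴴ = Bᵀ := conjTranspose_eq_transpose_of_trivial B
  have hVtV : Vᵀ * V = 1 := by
    rw [hVdef, ← conjTranspose_eq_transpose_of_trivial]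
    exact (Matrix.mem_unitaryGroup_iff').mp hM.eigenvectorUnitary.2
  have hVVt : V * Vᵀ = 1 := by
    rw [hVdef, ← conjTranspose_eq_transpose_of_trivial]
    exact (Matrix.mem_unitaryGroup_iff).mp hM.eigenvectorUnitary.2
  have hdiag : Vᵀ * (Bᵀ * B) * V = diagonal μ := by
    have h : star (hM.eigenvectorUnitary : Matrix (Fin I₂) (Fin I₂) ℝ) * (Bᴴ * B) *
        (hM.eigenvectorUnitary : Matrix (Fin I₂) (Fin I₂) ℝ) =
        diagonal (RCLike.ofReal ∘ hM.eigenvalues) := by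
      have h0 := hM.conjStarAlgAut_star_eigenvectorUnitary
      rwa [Unitary.conjStarAlgAut_star_apply] at h0
    rw [hVdef, hμdef, ← hBH, ← conjTranspose_eq_transpose_of_trivial,
      ← Matrix.star_eq_conjTranspose, h,
      show (RCLike.ofReal ∘ hM.eigenvalues : Fin I₂ → ℝ) = hM.eigenvalues from
        funext fun i => by simp [RCLike.ofReal_real_eq_id]]
  have hμ0 : ∀ i, 0 ≤ μ i := by
    rw [hμdef]
    exact fun i => (Matrix.posSemidef_conjTranspose_mul_self B).eigenvalues_nonneg i
  have hcard : Fintype.card {i // μ i ≠ 0} ≤ r := by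
    rw [hμdef, ← hM.rank_eq_card_non_zero_eigs]
    calc (Bᴴ * B).rank = B.rank := by rw [hBH]; exact Matrix.rank_transpose_mul_self B
      _ ≤ r := hrank
  clear hμdef hVdef
  have hBVtBV : (B * V)ᵀ * (B * V) = diagonal μ := by
    rw [transpose_mul, ← hdiag]
    simp only [Matrix.mul_assoc]
  have hBVzero : ∀ i, μ i = 0 → ∀ j, (B * V) j i = 0 := by
    intro i hi j
    have h1 : ((B * V)ᵀ * (B * V)) i i = μ i := by rw [hBVtBV, diagonal_apply_eq]
    have hBV : (∑ j, ((B * V) j i) ^ 2) = μ i := by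
      rw [← h1, Matrix.mul_apply]
      apply Finset.sum_congr rfl
      intro x _
      rw [Matrix.transpose_apply, pow_two]
    rw [hi] at hBV
    have h2 := (Finset.sum_eq_zero_iff_of_nonneg
      (fun j _ => sq_nonneg ((B * V) j i))).mp hBV j (Finset.mem_univ j)
    exact (pow_eq_zero_iff two_ne_zero).mp h2
  have hmulker : ∀ f g : Fin I₂ → ℝ, (∀ i, μ i ≠ 0 → f i = g i) →
      (B * V) * diagonal f = (B * V) * diagonal g := by
    intro f g hfg; ext j i
    rw [Matrix.mul_diagonal, Matrix.mul_diagonal]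
    rcases eq_or_ne (μ i) 0 with h | h
    · rw [hBVzero i h j]; ring
    · rw [hfg i h]
  constructor
  · -- membership
    show ∃ A₁ A₂, B = A₁ * A₂ᵀ ∧ nuclearNorm B = (1 / 2) * (frobSq A₁ + frobSq A₂)
    obtain ⟨e, einj⟩ : ∃ e : {i // μ i ≠ 0} → Fin r, Function.Injective e :=
      ⟨fun x => Fin.castLE hcard (Fintype.equivFin _ x),
        (Fin.castLE_injective hcard).comp (Fintype.equivFin _).injective⟩
    obtain ⟨P, hP⟩ : ∃ P : Matrix (Fin r) (Fin I₂) ℝ, P = Matrix.of (fun k i =>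
        if h : μ i ≠ 0 then (if e ⟨i, h⟩ = k then (1:ℝ) else 0) else 0) := ⟨_, rfl⟩
    obtain ⟨ι, hι⟩ : ∃ ι : Fin I₂ → ℝ, ι = fun i => if μ i = 0 then (0:ℝ) else 1 := ⟨_, rfl⟩
    obtain ⟨d, hd⟩ : ∃ d : Fin I₂ → ℝ, d = fun i => Real.sqrt (Real.sqrt (μ i)) := ⟨_, rfl⟩
    obtain ⟨d', hd'⟩ : ∃ d' : Fin I₂ → ℝ,
        d' = fun i => if μ i = 0 then (0:ℝ) else (Real.sqrt (Real.sqrt (μ i)))⁻¹ := ⟨_, rfl⟩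
    have hdd : ∀ i, d i * d i = Real.sqrt (μ i) := by
      intro i; rw [hd]; exact Real.mul_self_sqrt (Real.sqrt_nonneg _)
    have hdne : ∀ i, μ i ≠ 0 → d i ≠ 0 := by
      intro i hi; rw [hd]
      have hpos : 0 < μ i := lt_of_le_of_ne (hμ0 i) (Ne.symm hi)
      exact ne_of_gt (Real.sqrt_pos.mpr (Real.sqrt_pos.mpr hpos))
    have hPtP : Pᵀ * P = diagonal ι := by
      ext i i'
      rw [Matrix.mul_apply]
      simp only [hP, Matrix.transpose_apply, Matrix.of_apply]
      rcases eq_or_ne i i' with rfl | hii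
      · rw [diagonal_apply_eq, hι]
        by_cases hi : μ i = 0
        · simp [hi]
        · have h1 : ∀ k, (if h : μ i ≠ 0 then (if e ⟨i, h⟩ = k then (1:ℝ) else 0) else 0) *
              (if h : μ i ≠ 0 then (if e ⟨i, h⟩ = k then (1:ℝ) else 0) else 0)
              = if e ⟨i, hi⟩ = k then (1:ℝ) else 0 := by
            intro k
            rw [dif_pos hi]
            split <;> simp
          simp only [h1]
          rw [Finset.sum_ite_eq]
          simp [hi]
      · rw [diagonal_apply_ne _ hii]
        apply Finset.sum_eq_zero
        intro k _
        by_cases hi : μ i ≠ 0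
        · by_cases hi' : μ i' ≠ 0
          · rw [dif_pos hi, dif_pos hi']
            by_cases h1 : e ⟨i, hi⟩ = k
            · have h2 : e ⟨i', hi'⟩ ≠ k := by
                intro h2
                exact hii (congrArg Subtype.val (einj (h1.trans h2.symm)))
              rw [if_neg h2, mul_zero]
            · rw [if_neg h1, zero_mul]
          · rw [dif_neg hi', mul_zero]
        · rw [dif_neg hi, zero_mul]
    obtain ⟨A₂, hA₂d⟩ : ∃ A₂, A₂ = V * diagonal d * Pᵀ := ⟨_, rfl⟩
    obtain ⟨A₁, hA₁d⟩ : ∃ A₁, A₁ = B * V * diagonal d' * Pᵀ := ⟨_, rfl⟩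
    refine ⟨A₁, A₂, ?_, ?_⟩
    · -- B = A₁ * A₂ᵀ
      have step1 : A₁ * A₂ᵀ = B * V * (diagonal d' * ((Pᵀ * P) * (diagonal d * Vᵀ))) := by
        rw [hA₁d, hA₂d]
        simp only [transpose_mul, transpose_transpose, diagonal_transpose, Matrix.mul_assoc]
      have step2 : A₁ * A₂ᵀ = B * V * diagonal (fun i => d' i * ι i * d i) * Vᵀ := by
        rw [step1, hPtP, diag3_mul, ← Matrix.mul_assoc]
      have step3 : B * V * diagonal (fun i => d' i * ι i * d i)
          = B * V * diagonal (fun _ => (1:ℝ)) :=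
        hmulker (fun i => d' i * ι i * d i) (fun _ => (1:ℝ)) (fun i hi => by
          have hne := hdne i hi
          rw [hd] at hne
          simp only [hd', hι, hd, if_neg hi, mul_one]
          exact inv_mul_cancel₀ hne)
      rw [step2, step3, Matrix.diagonal_one]
      exact (by rw [Matrix.mul_one, Matrix.mul_assoc, hVVt, Matrix.mul_one] :
        B = B * V * (1 : Matrix (Fin I₂) (Fin I₂) ℝ) * Vᵀ)
    · -- value
      have hA₁sq : frobSq A₁ = ∑ i, Real.sqrt (μ i) := by
        rw [frobSq_eq_trace]
        have e1 : A₁ᵀ * A₁ = P * (diagonal d' * ((B * V)ᵀ * ((B * V) * (diagonal d' * Pᵀ)))) := by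
          rw [hA₁d]
          simp only [transpose_mul, transpose_transpose, diagonal_transpose, Matrix.mul_assoc]
        have e2 : (B * V)ᵀ * ((B * V) * (diagonal d' * Pᵀ)) = diagonal μ * (diagonal d' * Pᵀ) := by
          rw [← Matrix.mul_assoc, hBVtBV]
        rw [e1, e2, diag3_mul, Matrix.trace_mul_comm, Matrix.mul_assoc, hPtP,
          diagonal_mul_diagonal, Matrix.trace_diagonal]
        apply Finset.sum_congr rfl
        intro i _
        rcases eq_or_ne (μ i) 0 with h | h
        · simp [h, hd', hι]
        · simp only [hd', hι, if_neg h, mul_one]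
          have e3 : (Real.sqrt (Real.sqrt (μ i)))⁻¹ * μ i * (Real.sqrt (Real.sqrt (μ i)))⁻¹
              = μ i / (Real.sqrt (Real.sqrt (μ i)) * Real.sqrt (Real.sqrt (μ i))) := by ring
          rw [e3, Real.mul_self_sqrt (Real.sqrt_nonneg _), Real.div_sqrt]
      have hA₂sq : frobSq A₂ = ∑ i, Real.sqrt (μ i) := by
        rw [frobSq_eq_trace]
        have e1 : A₂ᵀ * A₂ = P * (diagonal d * (Vᵀ * (V * (diagonal d * Pᵀ)))) := by
          rw [hA₂d]
          simp only [transpose_mul, transpose_transpose, diagonal_transpose, Matrix.mul_assoc]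
        have e2 : Vᵀ * (V * (diagonal d * Pᵀ)) = diagonal d * Pᵀ := by
          rw [← Matrix.mul_assoc, hVtV, Matrix.one_mul]
        rw [e1, e2, diag_mul_diag_mul, Matrix.trace_mul_comm, Matrix.mul_assoc, hPtP,
          diagonal_mul_diagonal, Matrix.trace_diagonal]
        apply Finset.sum_congr rfl
        intro i _
        rcases eq_or_ne (μ i) 0 with h | h
        · simp [h, hd, hι]
        · simp only [hι, if_neg h, mul_one]
          exact hdd i
      rw [hnn, hA₁sq, hA₂sq]
      ring
  · -- lower bound
    rintro v ⟨A₁, A₂, hB, rfl⟩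
    obtain ⟨D₀, hD₀⟩ : ∃ D, D = diagonal (fun i => if μ i = 0 then (0:ℝ)
      else (Real.sqrt (μ i))⁻¹) := ⟨_, rfl⟩
    obtain ⟨W, hWdef⟩ : ∃ W, W = B * V * D₀ := ⟨_, rfl⟩
    have hWt : Wᵀ = D₀ * (B * V)ᵀ := by
      rw [hWdef, transpose_mul, hD₀, diagonal_transpose]
    have hWtBV : Wᵀ * (B * V) =
        diagonal (fun i => (if μ i = 0 then (0:ℝ) else (Real.sqrt (μ i))⁻¹) * μ i) := by
      rw [hWt, Matrix.mul_assoc, hBVtBV, hD₀, diagonal_mul_diagonal]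
    have htr : Matrix.trace (Wᵀ * (B * V)) = ∑ i, Real.sqrt (μ i) := by
      rw [hWtBV, Matrix.trace_diagonal]
      apply Finset.sum_congr rfl; intro i _
      rcases eq_or_ne (μ i) 0 with h | h
      · rw [h]; simp
      · rw [if_neg h, inv_mul_eq_div, Real.div_sqrt]
    have hWtW : Wᵀ * W = diagonal (fun i => if μ i = 0 then (0:ℝ) else 1) := by
      have step : Wᵀ * W = D₀ * ((B * V)ᵀ * (B * V)) * D₀ := by
        rw [hWt, hWdef]
        simp only [Matrix.mul_assoc]
      rw [step, hBVtBV, hD₀]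
      simp only [diagonal_mul_diagonal]
      refine congrArg diagonal (funext fun i => ?_)
      rcases eq_or_ne (μ i) 0 with h | h
      · simp [h]
      · have hpos : 0 < μ i := lt_of_le_of_ne (hμ0 i) (Ne.symm h)
        have hs : Real.sqrt (μ i) ≠ 0 := ne_of_gt (Real.sqrt_pos.mpr hpos)
        rw [if_neg h, if_neg h]
        have e : (Real.sqrt (μ i))⁻¹ * μ i * (Real.sqrt (μ i))⁻¹
            = μ i / (Real.sqrt (μ i) * Real.sqrt (μ i)) := by ring
        rw [e, Real.mul_self_sqrt (hμ0 i), div_self h]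
    obtain ⟨Q, hQdef⟩ : ∃ Q, Q = W * Wᵀ := ⟨_, rfl⟩
    have hQsymm : Qᵀ = Q := by rw [hQdef, transpose_mul, transpose_transpose]
    have hWE : W * diagonal (fun i => if μ i = 0 then (0:ℝ) else 1) = W := by
      rw [hWdef, hD₀, Matrix.mul_assoc, diagonal_mul_diagonal]
      exact hmulker _ _ (fun i hi => by simp [hi])
    have hQQ : Q * Q = Q := by
      calc Q * Q = W * (Wᵀ * W) * Wᵀ := by rw [hQdef]; simp only [Matrix.mul_assoc]
        _ = Q := by rw [hWtW, hWE, hQdef]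
    have key1 : Matrix.trace (Wᵀ * (B * V)) = Matrix.trace ((A₁ᵀ * W)ᵀ * (A₂ᵀ * V)) := by
      have hBV2 : B * V = A₁ * (A₂ᵀ * V) := by rw [hB, Matrix.mul_assoc]
      rw [hBV2, transpose_mul, transpose_transpose]
      congr 1
      simp only [Matrix.mul_assoc]
    have hY : frobSq (A₂ᵀ * V) = frobSq A₂ := by
      rw [frobSq_eq_trace', frobSq_eq_trace]
      congr 1
      calc (A₂ᵀ * V) * (A₂ᵀ * V)ᵀ = A₂ᵀ * (V * Vᵀ * A₂) := by
            rw [transpose_mul, transpose_transpose]; simp only [Matrix.mul_assoc]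
        _ = A₂ᵀ * A₂ := by rw [hVVt, Matrix.one_mul]
    have hX : frobSq (A₁ᵀ * W) ≤ frobSq A₁ := by
      have h1 : frobSq (A₁ᵀ * W) = Matrix.trace (A₁ᵀ * (Q * A₁)) := by
        rw [frobSq_eq_trace']
        congr 1
        rw [transpose_mul, transpose_transpose, hQdef]
        simp only [Matrix.mul_assoc]
      have e2 : (1 - Q) * (1 - Q) = 1 - Q := by
        have h' : (1 - Q) * (1 - Q) = 1 - Q - (Q - Q * Q) := by noncomm_ring
        rw [hQQ] at h'; simpa using h'
      have h2 : frobSq A₁ - frobSq (A₁ᵀ * W) = frobSq ((1 - Q) * A₁) := by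
        rw [h1, frobSq_eq_trace, frobSq_eq_trace]
        have e1 : ((1 - Q) * A₁)ᵀ * ((1 - Q) * A₁) = A₁ᵀ * A₁ - A₁ᵀ * (Q * A₁) := by
          calc ((1 - Q) * A₁)ᵀ * ((1 - Q) * A₁)
              = A₁ᵀ * ((1 - Q) * (1 - Q) * A₁) := by
                rw [transpose_mul, transpose_sub, transpose_one, hQsymm]
                simp only [Matrix.mul_assoc]
            _ = A₁ᵀ * ((1 - Q) * A₁) := by rw [e2]
            _ = A₁ᵀ * A₁ - A₁ᵀ * (Q * A₁) := by
                rw [Matrix.sub_mul, Matrix.one_mul, Matrix.mul_sub]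
        rw [e1, Matrix.trace_sub]
      have h3 := frobSq_nonneg ((1 - Q) * A₁)
      linarith
    calc nuclearNorm B = Matrix.trace ((A₁ᵀ * W)ᵀ * (A₂ᵀ * V)) := by rw [hnn, ← htr, key1]
      _ ≤ (1/2) * (frobSq (A₁ᵀ * W) + frobSq (A₂ᵀ * V)) := trace_transpose_mul_le _ _
      _ ≤ (1/2) * (frobSq A₁ + frobSq A₂) := by rw [hY]; linarith
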